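/- The quadratic equation in c² given by [(ρ₁H₂+ρ₂H₁)c² − g(ρ₂−ρ₁)H₁H₂][(ρ₂H₃+ρ₃H₂)c² − g(ρ₃−ρ₂)H₂H₃] − ρ₂²H₁H₃c⁴ = 0 has two distinct positive real roots c₀⁻² < c₀⁺² whenever 0 < ρ₁ < ρ₂ < ρ₃ and H₁, H₂, H₃ > 0. -/

import Mathlib

/-- The linear long wave speed equation for a three-layer fluid has two distinct
positive roots in `c²`. -/
theorem stmt_0 (ρ1 ρ2 ρ3 H1 H2 H3 g : ℝ)
    (hρ1 : 0 < ρ1) (hρ12 : ρ1 < ρ2) (hρ23 : ρ2 < ρ3)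
    (hH1 : 0 < H1) (hH2 : 0 < H2) (hH3 : 0 < H3) (hg : 0 < g) :
    ∃ x y : ℝ, 0 < x ∧ x < y ∧
      ((ρ1*H2 + ρ2*H1) * x - g*(ρ2-ρ1)*H1*H2) *
        ((ρ2*H3 + ρ3*H2) * x - g*(ρ3-ρ2)*H2*H3) - ρ2^2*H1*H3*x^2 = 0 ∧
      ((ρ1*H2 + ρ2*H1) * y - g*(ρ2-ρ1)*H1*H2) *
        ((ρ2*H3 + ρ3*H2) * y - g*(ρ3-ρ2)*H2*H3) - ρ2^2*H1*H3*y^2 = 0 := by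
  have hρ2 : 0 < ρ2 := hρ1.trans hρ12
  have hρ3 : 0 < ρ3 := hρ2.trans hρ23
  set A : ℝ := ρ1*H2 + ρ2*H1 with hAdef
  set B : ℝ := ρ2*H3 + ρ3*H2 with hBdef
  set P : ℝ := g*(ρ2-ρ1)*H1*H2 with hPdef
  set Q : ℝ := g*(ρ3-ρ2)*H2*H3 with hQdef
  set k : ℝ := ρ2^2*H1*H3 with hkdef
  have hA : 0 < A := by positivity
  have hB : 0 < B := by positivity
  have hP : 0 < P := by
    have : 0 < ρ2 - ρ1 := by linarith
    positivity
  have hQ : 0 < Q := by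
    have : 0 < ρ3 - ρ2 := by linarith
    positivity
  have hk : 0 < k := by positivity
  have ha : 0 < A*B - k := by
    have h1 : 0 < ρ1*ρ2*(H2*H3) := by positivity
    have h2 : 0 < ρ1*ρ3*(H2*H2) := by positivity
    have h3 : 0 < ρ2*ρ3*(H1*H2) := by positivity
    simp only [hAdef, hBdef, hkdef]
    nlinarith [h1, h2, h3]
  set f : ℝ → ℝ := fun x => (A * x - P) * (B * x - Q) - k*x^2 with hfdef
  have hcont : Continuous f := by fun_prop
  set x₁ : ℝ := P / A with hx1def
  have hx1pos : 0 < x₁ := by positivity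
  have hfx1 : f x₁ < 0 := by
    have h0 : A * x₁ - P = 0 := by
      rw [hx1def, sub_eq_zero]
      field_simp [hA.ne']
    simp only [hfdef, h0, zero_mul, zero_sub, neg_neg]
    have : 0 < k * x₁^2 := by positivity
    linarith
  have hf0 : 0 < f 0 := by
    simp only [hfdef]
    nlinarith [mul_pos hP hQ]
  set M : ℝ := x₁ + (A*Q + B*P) / (A*B - k) + 1 with hMdef
  have hMx1 : x₁ < M := by
    have : 0 < (A*Q + B*P) / (A*B - k) := by positivity
    simp only [hMdef]; linarith
  have hMpos : 0 < M := hx1pos.trans hMx1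
  have hfM : 0 < f M := by
    have hM1 : (A*B - k) * M - (A*Q + B*P) = (A*B - k) * (x₁ + 1) := by
      rw [hMdef]
      field_simp [ha.ne']
      ring
    have hpos : 0 < (A*B - k) * (x₁ + 1) := by positivity
    have hPQ : 0 < P * Q := mul_pos hP hQ
    have hexp : f M = ((A*B - k) * M - (A*Q + B*P)) * M + P*Q := by
      simp only [hfdef]; ring
    rw [hexp, hM1]
    nlinarith [mul_pos hpos hMpos]
  -- first root in (0, x₁)
  obtain ⟨x, hxmem, hxval⟩ : ∃ x ∈ Set.Ioo (0:ℝ) x₁, f x = 0 := by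
    have := intermediate_value_Ioo' (le_of_lt hx1pos) hcont.continuousOn
      (a := 0) (b := x₁)
    have h0mem : (0:ℝ) ∈ Set.Ioo (f x₁) (f 0) := ⟨hfx1, hf0⟩
    obtain ⟨x, hx, hfx⟩ := this h0mem
    exact ⟨x, hx, hfx⟩
  -- second root in (x₁, M)
  obtain ⟨y, hymem, hyval⟩ : ∃ y ∈ Set.Ioo x₁ M, f y = 0 := by
    have := intermediate_value_Ioo (le_of_lt hMx1) hcont.continuousOn
      (a := x₁) (b := M)
    have h0mem : (0:ℝ) ∈ Set.Ioo (f x₁) (f M) := ⟨hfx1, hfM⟩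
    obtain ⟨y, hy, hfy⟩ := this h0mem
    exact ⟨y, hy, hfy⟩
  refine ⟨x, y, hxmem.1, lt_trans hxmem.2 hymem.1, ?_, ?_⟩
  · simpa [hfdef, hAdef, hBdef, hPdef, hQdef, hkdef, mul_assoc] using hxval
  · simpa [hfdef, hAdef, hBdef, hPdef, hQdef, hkdef, mul_assoc] using hyval
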